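/- Let Γ be a multitree with chain structure 𝐧, let e be an edge of the tree Γ̄ with endpoints v and v', and let w = (w_Γ, μ) be an admissible multidegree on (Γ, 𝐧). Define the twist of w at (e, v) to be the composite of the twists at all vertices of Γ lying in the same connected component as v in Γ̄∖{e}. Then the twist of w at (e, v) changes w exactly as follows: for each edge ẽ of Γ joining v and v', the value μ(ẽ) is increased by σ(ẽ, v); w_Γ(v) is decreased by the number of edges ẽ of Γ joining v and v' whose old value μ(ẽ) was 0; w_Γ(v') is increased by the number of edges ẽ of Γ joining v and v' whose new value μ(ẽ) is 0; and all other values of w_Γ and μ are unchanged. -/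

import Mathlib

open scoped Classical

namespace LLS

variable {V E : Type*}

/-- `σ(e,v)`: `1` if `v` is the tail of `e`, `-1` if `v` is the head of `e`, `0` otherwise. -/
noncomputable def sigma (tail head : E → V) (e : E) (v : V) : ℤ :=
  if tail e = v then 1 else if head e = v then -1 else 0

/-- The endpoint of `e` other than `v` (for `e` adjacent to `v`). -/
noncomputable def otherEnd (tail head : E → V) (e : E) (v : V) : V :=
  if tail e = v then head e else tail e

/-- The multigraph is loopless. -/
def Loopless (tail head : E → V) : Prop := ∀ e, tail e ≠ head e

/-- The multigraph is connected. -/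
def MGConnected (tail head : E → V) : Prop :=
  ∀ u v : V, Relation.ReflTransGen
    (fun a b => ∃ e, (tail e = a ∧ head e = b) ∨ (tail e = b ∧ head e = a)) u v

/-- An admissible multidegree on `(Γ, 𝐧)`: a function `V(Γ) → ℤ` together with an
element `μ(e) ∈ ℤ/𝐧(e)ℤ` for each edge `e`. -/
structure AdmMD (V E : Type*) (n : E → ℕ) where
  wV : V → ℤ
  mu : ∀ e : E, ZMod (n e)

section FinGraph

variable [Fintype V] [Fintype E] [DecidableEq V] [DecidableEq E]

/-- The twist of an admissible multidegree at a vertex `v`. -/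
noncomputable def twist (tail head : E → V) (n : E → ℕ) (w : AdmMD V E n) (v : V) :
    AdmMD V E n where
  wV u := w.wV u
    - (if u = v then ((Finset.univ.filter fun e : E =>
        sigma tail head e v ≠ 0 ∧ w.mu e = 0).card : ℤ) else 0)
    + ((Finset.univ.filter fun e : E => sigma tail head e v ≠ 0 ∧
        w.mu e + (sigma tail head e v : ZMod (n e)) = 0 ∧
        otherEnd tail head e v = u).card : ℤ)
  mu e := w.mu e + (sigma tail head e v : ZMod (n e))

/-- The negative twist of an admissible multidegree at a vertex `v`
(the inverse of `twist`). -/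
noncomputable def negTwist (tail head : E → V) (n : E → ℕ) (w : AdmMD V E n) (v : V) :
    AdmMD V E n where
  wV u := w.wV u
    + (if u = v then ((Finset.univ.filter fun e : E => sigma tail head e v ≠ 0 ∧
        w.mu e - (sigma tail head e v : ZMod (n e)) = 0).card : ℤ) else 0)
    - ((Finset.univ.filter fun e : E => sigma tail head e v ≠ 0 ∧
        w.mu e = 0 ∧ otherEnd tail head e v = u).card : ℤ)
  mu e := w.mu e - (sigma tail head e v : ZMod (n e))

/-- An admissible multidegree is concentrated at `v` if there is an ordering of all
vertices starting with `v` such that composing the negative twists at all previous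
vertices makes the multidegree negative at each subsequent vertex. -/
def Concentrated (tail head : E → V) (n : E → ℕ) (w : AdmMD V E n) (v : V) : Prop :=
  ∃ l : List V, l.Nodup ∧ (∀ x : V, x ∈ l) ∧ l.head? = some v ∧
    ∀ (i : ℕ) (h : i < l.length), 0 < i →
      (((l.take i).foldl (negTwist tail head n) w).wV (l.get ⟨i, h⟩)) < 0

/-- `w` is obtained from `w₀` by a finite sequence of twists, i.e. `w ∈ V(G(w₀))`. -/
def TwistSeq (tail head : E → V) (n : E → ℕ) (w₀ w : AdmMD V E n) : Prop :=
  ∃ l : List V, l.foldl (twist tail head n) w₀ = w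

/-- `l` records the successive twist vertices of a minimal path from `w` to `w'`
in `G(w₀)`. -/
def IsMinPath (tail head : E → V) (n : E → ℕ) (w w' : AdmMD V E n) (l : List V) : Prop :=
  l.foldl (twist tail head n) w = w' ∧
    ∀ l' : List V, l'.foldl (twist tail head n) w = w' → l.length ≤ l'.length

/-- The membership condition describing the subgraph `Ḡ(w₀)` of `G(w₀)`:
no minimal path from `w` to `w_v` involves twisting at `v`. -/
def InBarG (tail head : E → V) (n : E → ℕ) (w₀ : AdmMD V E n) (wv : V → AdmMD V E n)
    (w : AdmMD V E n) : Prop :=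
  TwistSeq tail head n w₀ w ∧
    ∀ (v : V) (l : List V), IsMinPath tail head n w (wv v) l → v ∉ l

/-- Edges joining `v` and `u`. -/
noncomputable def edgesBetween (tail head : E → V) (v u : V) : Finset E :=
  Finset.univ.filter fun e => (tail e = v ∧ head e = u) ∨ (head e = v ∧ tail e = u)

/-- Edges adjacent to `v`. -/
noncomputable def edgesAdj (tail head : E → V) (v : V) : Finset E :=
  Finset.univ.filter fun e => tail e = v ∨ head e = v

/-- The change of a divisor effected by a single chip-firing move at `v`. -/
noncomputable def fireDelta (tail head : E → V) (v : V) : V → ℤ := fun u =>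
  ((edgesBetween tail head v u).card : ℤ)
    - (if u = v then ((edgesAdj tail head v).card : ℤ) else 0)

/-- A chip-firing move (twist) at `v`. -/
noncomputable def chipFire (tail head : E → V) (D : V → ℤ) (v : V) : V → ℤ :=
  fun u => D u + fireDelta tail head v u

/-- The inverse of a chip-firing move at `v`. -/
noncomputable def negChipFire (tail head : E → V) (D : V → ℤ) (v : V) : V → ℤ :=
  fun u => D u - fireDelta tail head v u

/-- A divisor (multidegree) on a graph is concentrated at `v`. -/
def ConcentratedDiv (tail head : E → V) (D : V → ℤ) (v : V) : Prop :=
  ∃ l : List V, l.Nodup ∧ (∀ x : V, x ∈ l) ∧ l.head? = some v ∧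
    ∀ (i : ℕ) (h : i < l.length), 0 < i →
      (((l.take i).foldl (negChipFire tail head) D) (l.get ⟨i, h⟩)) < 0

/-- A divisor on a graph is `v₀`-reduced. -/
def VReduced (tail head : E → V) (D : V → ℤ) (v₀ : V) : Prop :=
  (∀ u, u ≠ v₀ → 0 ≤ D u) ∧
    ∀ S : Finset V, S.Nonempty → v₀ ∉ S →
      ∃ v ∈ S, D v < ((Finset.univ.filter fun e : E =>
        (tail e = v ∧ head e ∉ S) ∨ (head e = v ∧ tail e ∉ S)).card : ℤ)

/-- The function `D_{w,v}` on edges of `Γ` determined by a path `l` from `w` to `w_v`. -/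
noncomputable def DFun (tail head : E → V) (n : E → ℕ) (w : AdmMD V E n) (l : List V)
    (v : V) (et : E) : ℤ :=
  (((Finset.univ : Finset (Fin l.length)).filter fun j =>
      l.get j = otherEnd tail head et v ∧
        ((l.take (j.val + 1)).foldl (twist tail head n) w).mu et = 0).card : ℤ)
  - (((Finset.univ : Finset (Fin l.length)).filter fun j =>
      l.get j = v ∧ ((l.take j.val).foldl (twist tail head n) w).mu et = 0).card : ℤ)

end FinGraph

/-- The tail map of the subdivided graph `Γ̃`: the edge `e` of `Γ` is subdivided into
`𝐧(e)` edges `(e, j)`, `j = 0, …, 𝐧(e) - 1`, numbered from the tail of `e`; the new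
vertices over `e` are `(e, i)`, `i = 0, …, 𝐧(e) - 2`, with `(e, i)` being the
`(i+1)`-st new vertex from the tail of `e`. -/
def tailT (tail head : E → V) (n : E → ℕ) :
    (Σ e : E, Fin (n e)) → V ⊕ Σ e : E, Fin (n e - 1) := fun p =>
  if h : p.2.val = 0 then Sum.inl (tail p.1)
  else Sum.inr ⟨p.1, ⟨p.2.val - 1, by have := p.2.isLt; omega⟩⟩

/-- The head map of the subdivided graph `Γ̃`. -/
def headT (tail head : E → V) (n : E → ℕ) :
    (Σ e : E, Fin (n e)) → V ⊕ Σ e : E, Fin (n e - 1) := fun p =>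
  if h : p.2.val = n p.1 - 1 then Sum.inl (head p.1)
  else Sum.inr ⟨p.1, ⟨p.2.val, by have := p.2.isLt; omega⟩⟩

/-- The multidegree on the subdivided graph `Γ̃` induced by an admissible multidegree:
it agrees with `w` on old vertices, is `1` on the `μ(e)`-th new vertex over `e`
when `μ(e) ≠ 0`, and is `0` on all other new vertices. -/
noncomputable def inducedMD (n : E → ℕ) (w : AdmMD V E n) :
    (V ⊕ Σ e : E, Fin (n e - 1)) → ℤ
  | Sum.inl v => w.wV v
  | Sum.inr ⟨e, i⟩ => if (w.mu e).val = i.val + 1 then 1 else 0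

/-- The simple graph `Γ̄` associated to the multigraph `Γ`: same vertices, one edge
between each pair of adjacent vertices. -/
def barGraph (tail head : E → V) : SimpleGraph V where
  Adj u v := u ≠ v ∧ ∃ e, (tail e = u ∧ head e = v) ∨ (tail e = v ∧ head e = u)
  symm := by
    refine ⟨?_⟩
    intro u v h
    exact ⟨h.1.symm, h.2.imp fun e he => he.symm⟩
  loopless := ⟨fun u h => h.1 rfl⟩


section Aux

variable [Fintype V] [Fintype E] [DecidableEq V] [DecidableEq E]
variable (tail head : E → V) (n : E → ℕ)

set_option linter.unusedSectionVars false

lemma sigma_tail (e : E) : sigma tail head e (tail e) = 1 := by simp [sigma]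

lemma sigma_head (e : E) (h : tail e ≠ head e) : sigma tail head e (head e) = -1 := by
  simp [sigma, h]

lemma sigma_other (e : E) (x : V) (h1 : tail e ≠ x) (h2 : head e ≠ x) :
    sigma tail head e x = 0 := by simp [sigma, h1, h2]

lemma otherEnd_tail (e : E) : otherEnd tail head e (tail e) = head e := by simp [otherEnd]

lemma otherEnd_head (e : E) (h : tail e ≠ head e) :
    otherEnd tail head e (head e) = tail e := by simp [otherEnd, h]

/-- per-edge contribution to `wV u` along a list of twists, starting from value `m`. -/
noncomputable def ec (e : E) (u : V) : ZMod (n e) → List V → ℤ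
  | _, [] => 0
  | m, x :: t =>
      ((if sigma tail head e x ≠ 0 ∧ m + (sigma tail head e x : ZMod (n e)) = 0 ∧
          otherEnd tail head e x = u then (1 : ℤ) else 0)
        - (if u = x ∧ sigma tail head e x ≠ 0 ∧ m = 0 then (1 : ℤ) else 0))
      + ec e u (m + (sigma tail head e x : ZMod (n e))) t

lemma ec_skip (e : E) (u x : V) (m : ZMod (n e)) (t : List V)
    (h1 : tail e ≠ x) (h2 : head e ≠ x) :
    ec tail head n e u m (x :: t) = ec tail head n e u m t := by
  simp [ec, sigma_other tail head e x h1 h2]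

lemma ec_none (e : E) (u : V) (m : ZMod (n e)) (l : List V)
    (h1 : tail e ∉ l) (h2 : head e ∉ l) :
    ec tail head n e u m l = 0 := by
  induction l generalizing m with
  | nil => rfl
  | cons x t ih =>
    rw [ec_skip tail head n e u x m t (fun h => h1 (h ▸ (List.mem_cons_self : x ∈ x :: t)))
      (fun h => h2 (h ▸ (List.mem_cons_self : x ∈ x :: t)))]
    exact ih m (fun h => h1 (List.mem_cons_of_mem x h)) (fun h => h2 (List.mem_cons_of_mem x h))

lemma ec_tail (e : E) (u : V) (m : ZMod (n e)) (l : List V) (hth : tail e ≠ head e)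
    (hnd : l.Nodup) (ht : tail e ∈ l) (hh : head e ∉ l) :
    ec tail head n e u m l =
      (if m + 1 = 0 ∧ head e = u then (1 : ℤ) else 0)
      - (if u = tail e ∧ m = 0 then (1 : ℤ) else 0) := by
  induction l generalizing m with
  | nil => simp at ht
  | cons x t ih =>
    rcases List.nodup_cons.mp hnd with ⟨hx, hnt⟩
    by_cases hxe : tail e = x
    · have htnt : tail e ∉ t := hxe ▸ hx
      have hhnt : head e ∉ t := fun h => hh (List.mem_cons_of_mem x h)
      rw [show x = tail e from hxe.symm]
      rw [ec]
      rw [ec_none tail head n e u _ t htnt hhnt]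
      simp [sigma_tail tail head e, otherEnd_tail tail head e]
    · have hxh : head e ≠ x := fun h => hh (h ▸ (List.mem_cons_self : x ∈ x :: t))
      rw [ec_skip tail head n e u x m t hxe hxh]
      exact ih m hnt ((List.mem_cons.mp ht).resolve_left hxe)
        (fun h => hh (List.mem_cons_of_mem x h))

lemma ec_head (e : E) (u : V) (m : ZMod (n e)) (l : List V) (hth : tail e ≠ head e)
    (hnd : l.Nodup) (ht : tail e ∉ l) (hh : head e ∈ l) :
    ec tail head n e u m l =
      (if m - 1 = 0 ∧ tail e = u then (1 : ℤ) else 0)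
      - (if u = head e ∧ m = 0 then (1 : ℤ) else 0) := by
  induction l generalizing m with
  | nil => simp at hh
  | cons x t ih =>
    rcases List.nodup_cons.mp hnd with ⟨hx, hnt⟩
    by_cases hxe : head e = x
    · have hhnt : head e ∉ t := hxe ▸ hx
      have htnt : tail e ∉ t := fun h => ht (List.mem_cons_of_mem x h)
      rw [show x = head e from hxe.symm]
      rw [ec]
      rw [ec_none tail head n e u _ t htnt hhnt]
      rw [show m + ((sigma tail head e (head e) : ℤ) : ZMod (n e)) = m - 1 by
        rw [sigma_head tail head e hth]; push_cast; ring]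
      simp [sigma_head tail head e hth, otherEnd_head tail head e hth]
    · have hxt : tail e ≠ x := fun h => ht (h ▸ (List.mem_cons_self : x ∈ x :: t))
      rw [ec_skip tail head n e u x m t hxt hxe]
      exact ih m hnt (fun h => ht (List.mem_cons_of_mem x h))
        ((List.mem_cons.mp hh).resolve_left hxe)

lemma if_cancel {P Q P' Q' : Prop} [Decidable P] [Decidable Q] [Decidable P'] [Decidable Q']
    (hP : P ↔ P') (hQ : Q ↔ Q') :
    (if P then (1 : ℤ) else 0) - (if Q then 1 else 0)
      + ((if Q' then 1 else 0) - (if P' then 1 else 0)) = 0 := by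
  simp only [hP, hQ]; ring

lemma ec_both (e : E) (u : V) (m : ZMod (n e)) (l : List V) (hth : tail e ≠ head e)
    (hnd : l.Nodup) (ht : tail e ∈ l) (hh : head e ∈ l) :
    ec tail head n e u m l = 0 := by
  induction l generalizing m with
  | nil => simp at ht
  | cons x t ih =>
    rcases List.nodup_cons.mp hnd with ⟨hx, hnt⟩
    by_cases hxt : tail e = x
    · have htnt : tail e ∉ t := hxt ▸ hx
      have hht : head e ∈ t := by
        rcases List.mem_cons.mp hh with h | h
        · exact absurd (hxt.trans h.symm) hth
        · exact h
      rw [show x = tail e from hxt.symm]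
      rw [ec]
      rw [ec_head tail head n e u _ t hth hnt htnt hht]
      simp only [sigma_tail tail head e, otherEnd_tail tail head e, Int.cast_one]
      have hne : (1 : ℤ) ≠ 0 := one_ne_zero
      simp only [hne, true_and, ne_eq, not_false_eq_true]
      rw [show m + 1 - 1 = m by ring]
      exact if_cancel (P := m + 1 = 0 ∧ head e = u)
        ⟨fun h => ⟨h.2.symm, h.1⟩, fun h => ⟨h.2, h.1.symm⟩⟩
        ⟨fun h => ⟨h.2, h.1.symm⟩, fun h => ⟨h.2.symm, h.1⟩⟩
    · by_cases hxh : head e = x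
      · have hhnt : head e ∉ t := hxh ▸ hx
        have htt : tail e ∈ t := by
          rcases List.mem_cons.mp ht with h | h
          · exact absurd h hxt
          · exact h
        rw [show x = head e from hxh.symm]
        rw [ec]
        rw [ec_tail tail head n e u _ t hth hnt htt hhnt]
        simp only [sigma_head tail head e hth, otherEnd_head tail head e hth, Int.cast_neg,
          Int.cast_one]
        have hne : (-1 : ℤ) ≠ 0 := by norm_num
        simp only [hne, true_and, ne_eq, not_false_eq_true]
        rw [show m + -1 + 1 = m by ring, show m + -1 = m - 1 by ring]
        exact if_cancel (P := m - 1 = 0 ∧ tail e = u)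
          ⟨fun h => ⟨h.2.symm, h.1⟩, fun h => ⟨h.2, h.1.symm⟩⟩
          ⟨fun h => ⟨h.2, h.1.symm⟩, fun h => ⟨h.2.symm, h.1⟩⟩
      · rw [ec_skip tail head n e u x m t hxt hxh]
        exact ih m hnt ((List.mem_cons.mp ht).resolve_left hxt)
          ((List.mem_cons.mp hh).resolve_left hxh)

lemma foldl_mu (e : E) : ∀ (l : List V) (w : AdmMD V E n),
    (l.foldl (twist tail head n) w).mu e
      = w.mu e + (((l.map (sigma tail head e)).sum : ℤ) : ZMod (n e))
  | [], w => by simp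
  | x :: t, w => by
    rw [List.foldl_cons, foldl_mu e t (twist tail head n w x)]
    show w.mu e + (sigma tail head e x : ZMod (n e)) + _ = _
    rw [List.map_cons, List.sum_cons]
    push_cast
    ring

lemma foldl_wV : ∀ (l : List V) (w : AdmMD V E n) (u : V),
    (l.foldl (twist tail head n) w).wV u
      = w.wV u + ∑ e : E, ec tail head n e u (w.mu e) l
  | [], w, u => by simp [ec]
  | x :: t, w, u => by
    rw [List.foldl_cons, foldl_wV t (twist tail head n w x) u]
    have hmu : ∀ e : E, (twist tail head n w x).mu e
        = w.mu e + (sigma tail head e x : ZMod (n e)) := fun e => rfl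
    simp only [hmu]
    have hsum : ∀ e : E, ec tail head n e u (w.mu e) (x :: t)
        = ((if sigma tail head e x ≠ 0 ∧
              w.mu e + (sigma tail head e x : ZMod (n e)) = 0 ∧
              otherEnd tail head e x = u then (1 : ℤ) else 0)
          - (if u = x ∧ sigma tail head e x ≠ 0 ∧ w.mu e = 0 then (1 : ℤ) else 0))
          + ec tail head n e u (w.mu e + (sigma tail head e x : ZMod (n e))) t :=
      fun e => rfl
    rw [show (∑ e : E, ec tail head n e u (w.mu e) (x :: t)) = _ from
      Finset.sum_congr rfl fun e _ => hsum e]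
    rw [Finset.sum_add_distrib, Finset.sum_sub_distrib]
    have hwv : (twist tail head n w x).wV u = w.wV u
        - (if u = x then ((Finset.univ.filter fun e : E =>
            sigma tail head e x ≠ 0 ∧ w.mu e = 0).card : ℤ) else 0)
        + ((Finset.univ.filter fun e : E => sigma tail head e x ≠ 0 ∧
            w.mu e + (sigma tail head e x : ZMod (n e)) = 0 ∧
            otherEnd tail head e x = u).card : ℤ) := rfl
    rw [hwv]
    rw [Finset.natCast_card_filter, Finset.natCast_card_filter]
    have : (∑ e : E, if u = x ∧ sigma tail head e x ≠ 0 ∧ w.mu e = 0 then (1 : ℤ) else 0)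
        = if u = x then (∑ e : E, if sigma tail head e x ≠ 0 ∧ w.mu e = 0
            then (1 : ℤ) else 0) else 0 := by
      by_cases h : u = x <;> simp [h]
    rw [this]
    ring

lemma sum_sigma (e : E) (hth : tail e ≠ head e) :
    ∀ (l : List V), l.Nodup →
      (l.map (sigma tail head e)).sum
        = (if tail e ∈ l then (1 : ℤ) else 0) - (if head e ∈ l then (1 : ℤ) else 0)
  | [], _ => by simp
  | x :: t, hnd => by
    rcases List.nodup_cons.mp hnd with ⟨hx, hnt⟩
    rw [List.map_cons, List.sum_cons, sum_sigma e hth t hnt]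
    by_cases h1 : tail e = x
    · have h2 : head e ≠ x := fun h => hth (h1.trans h.symm)
      have ht : tail e ∉ t := h1 ▸ hx
      simp [← h1, sigma_tail tail head e, ht, h2, List.mem_cons, Ne.symm h2, Ne.symm hth]
      ring
    · by_cases h2 : head e = x
      · have hh : head e ∉ t := h2 ▸ hx
        simp [← h2, sigma_head tail head e hth, hh, h1, List.mem_cons, Ne.symm h1, hth]
        ring
      · simp [sigma_other tail head e x h1 h2, List.mem_cons, h1, h2, Ne.symm h1, Ne.symm h2,
          eq_comm]


end Aux

/-- on a multitree, the twist at `(e,v)` — the composite of twists at all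
vertices in the connected component of `v` in `Γ̄∖{e}` — changes only `μ(ẽ)` for edges
`ẽ` joining `v` and `v'`, and `w_Γ(v)`, `w_Γ(v')`, by the stated amounts. -/
theorem statement_13 {V E : Type*} [Fintype V] [Fintype E] [DecidableEq V] [DecidableEq E]
    (tail head : E → V) (n : E → ℕ)
    (hloop : Loopless tail head)
    (htree : (barGraph tail head).IsTree)
    (hn : ∀ e, 0 < n e)
    (v v' : V) (hadj : (barGraph tail head).Adj v v')
    (w : AdmMD V E n)
    (l : List V) (hnd : l.Nodup)
    (hmem : ∀ u : V, u ∈ l ↔ Relation.ReflTransGen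
      (fun a b => (barGraph tail head).Adj a b ∧
        ¬((a = v ∧ b = v') ∨ (a = v' ∧ b = v))) v u) :
    (∀ et : E, ((tail et = v ∧ head et = v') ∨ (tail et = v' ∧ head et = v)) →
        (l.foldl (twist tail head n) w).mu et
          = w.mu et + (sigma tail head et v : ZMod (n et))) ∧
    (∀ et : E, ¬((tail et = v ∧ head et = v') ∨ (tail et = v' ∧ head et = v)) →
        (l.foldl (twist tail head n) w).mu et = w.mu et) ∧
    ((l.foldl (twist tail head n) w).wV v = w.wV v -
        ((Finset.univ.filter fun et : E =>
          ((tail et = v ∧ head et = v') ∨ (tail et = v' ∧ head et = v)) ∧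
            w.mu et = 0).card : ℤ)) ∧
    ((l.foldl (twist tail head n) w).wV v' = w.wV v' +
        ((Finset.univ.filter fun et : E =>
          ((tail et = v ∧ head et = v') ∨ (tail et = v' ∧ head et = v)) ∧
            w.mu et + (sigma tail head et v : ZMod (n et)) = 0).card : ℤ)) ∧
    (∀ u : V, u ≠ v → u ≠ v' → (l.foldl (twist tail head n) w).wV u = w.wV u) := by
  have hvv' : v ≠ v' := hadj.ne
  have hvl : v ∈ l := (hmem v).mpr Relation.ReflTransGen.refl
  have hv'l : v' ∉ l := by
    intro h
    have h2 := (hmem v').mp h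
    have hreach : ((barGraph tail head) \ SimpleGraph.fromEdgeSet {s(v, v')}).Reachable v v' := by
      rw [SimpleGraph.reachable_iff_reflTransGen]
      refine Relation.ReflTransGen.mono ?_ _ _ h2
      intro a b hab
      rw [SimpleGraph.sdiff_adj, SimpleGraph.fromEdgeSet_adj]
      refine ⟨hab.1, fun hc => hab.2 ?_⟩
      have := hc.1
      rw [Set.mem_singleton_iff, Sym2.eq_iff] at this
      exact this
    have hb : (barGraph tail head).IsBridge s(v, v') :=
      (SimpleGraph.isAcyclic_iff_forall_adj_isBridge.mp htree.IsAcyclic) hadj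
    exact (SimpleGraph.isBridge_iff.mp hb) hreach
  have hside : ∀ et : E, ¬((tail et = v ∧ head et = v') ∨ (tail et = v' ∧ head et = v)) →
      (tail et ∈ l ↔ head et ∈ l) := by
    intro et hnb
    have ha : (barGraph tail head).Adj (tail et) (head et) := (⟨hloop et, et, Or.inl ⟨rfl, rfl⟩⟩ :
      tail et ≠ head et ∧ ∃ e, (tail e = tail et ∧ head e = head et) ∨ (tail e = head et ∧ head e = tail et))
    constructor
    · intro h
      exact (hmem _).mpr (Relation.ReflTransGen.tail ((hmem _).mp h) ⟨ha, hnb⟩)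
    · intro h
      exact (hmem _).mpr (Relation.ReflTransGen.tail ((hmem _).mp h) ⟨ha.symm, fun hc => hnb (by tauto)⟩)
  refine ⟨?_, ?_, ?_, ?_, ?_⟩
  · -- mu changes for edges between v and v'
    intro et hbet
    rw [foldl_mu, sum_sigma tail head et (hloop et) l hnd]
    rcases hbet with ⟨h1, h2⟩ | ⟨h1, h2⟩
    · congr 1
      rw [h1, h2]
      simp [sigma, hvl, hv'l, h1]
    · congr 1
      rw [h1, h2]
      simp [sigma, hvl, hv'l, h1, h2, hvv'.symm]
  · -- mu unchanged otherwise
    intro et hnb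
    rw [foldl_mu, sum_sigma tail head et (hloop et) l hnd]
    rw [show (if tail et ∈ l then (1 : ℤ) else 0) - (if head et ∈ l then 1 else 0) = 0 by
      simp [hside et hnb]]
    simp
  · -- wV at v
    rw [foldl_wV]
    have key : ∀ et : E, ec tail head n et v (w.mu et) l =
        -(if ((tail et = v ∧ head et = v') ∨ (tail et = v' ∧ head et = v)) ∧ w.mu et = 0
          then (1 : ℤ) else 0) := by
      intro et
      by_cases hbet : (tail et = v ∧ head et = v') ∨ (tail et = v' ∧ head et = v)
      · rcases hbet with ⟨h1, h2⟩ | ⟨h1, h2⟩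
        · rw [ec_tail tail head n et v _ l (hloop et) hnd (by rw [h1]; exact hvl)
            (by rw [h2]; exact hv'l)]
          simp [h1, h2, hvv'.symm]
        · rw [ec_head tail head n et v _ l (hloop et) hnd (by rw [h1]; exact hv'l)
            (by rw [h2]; exact hvl)]
          simp [h1, h2, hvv'.symm]
      · rw [show (-(if ((tail et = v ∧ head et = v') ∨ (tail et = v' ∧ head et = v)) ∧
            w.mu et = 0 then (1 : ℤ) else 0)) = 0 by simp [hbet]]
        by_cases htl : tail et ∈ l
        · exact ec_both tail head n et v _ l (hloop et) hnd htl ((hside et hbet).mp htl)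
        · exact ec_none tail head n et v _ l htl (fun h => htl ((hside et hbet).mpr h))
    rw [Finset.sum_congr rfl fun e _ => key e, Finset.sum_neg_distrib, Finset.sum_boole]
    ring
  · -- wV at v'
    rw [foldl_wV]
    have key : ∀ et : E, ec tail head n et v' (w.mu et) l =
        (if ((tail et = v ∧ head et = v') ∨ (tail et = v' ∧ head et = v)) ∧
            w.mu et + (sigma tail head et v : ZMod (n et)) = 0 then (1 : ℤ) else 0) := by
      intro et
      by_cases hbet : (tail et = v ∧ head et = v') ∨ (tail et = v' ∧ head et = v)
      · rcases hbet with ⟨h1, h2⟩ | ⟨h1, h2⟩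
        · rw [ec_tail tail head n et v' _ l (hloop et) hnd (by rw [h1]; exact hvl)
            (by rw [h2]; exact hv'l)]
          have hs : sigma tail head et v = 1 := by simp [sigma, h1]
          rw [hs]
          simp [h1, h2, hvv', hvv'.symm]
        · rw [ec_head tail head n et v' _ l (hloop et) hnd (by rw [h1]; exact hv'l)
            (by rw [h2]; exact hvl)]
          have hs : sigma tail head et v = -1 := by simp [sigma, h1, h2, hvv'.symm]
          rw [hs]
          rw [show (w.mu et) + (((-1 : ℤ) : ZMod (n et))) = w.mu et - 1 by push_cast; ring]
          simp [h1, h2, hvv', hvv'.symm]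
      · rw [show (if ((tail et = v ∧ head et = v') ∨ (tail et = v' ∧ head et = v)) ∧
            w.mu et + (sigma tail head et v : ZMod (n et)) = 0 then (1 : ℤ) else 0) = 0 by
            simp [hbet]]
        by_cases htl : tail et ∈ l
        · exact ec_both tail head n et v' _ l (hloop et) hnd htl ((hside et hbet).mp htl)
        · exact ec_none tail head n et v' _ l htl (fun h => htl ((hside et hbet).mpr h))
    rw [Finset.sum_congr rfl fun e _ => key e, Finset.sum_boole]
  · -- wV elsewhere
    intro u hu hu'
    rw [foldl_wV]
    have key : ∀ et : E, ec tail head n et u (w.mu et) l = 0 := by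
      intro et
      by_cases hbet : (tail et = v ∧ head et = v') ∨ (tail et = v' ∧ head et = v)
      · rcases hbet with ⟨h1, h2⟩ | ⟨h1, h2⟩
        · rw [ec_tail tail head n et u _ l (hloop et) hnd (by rw [h1]; exact hvl)
            (by rw [h2]; exact hv'l)]
          have h3 : v' ≠ u := fun h => hu' h.symm
          have h4 : v ≠ u := fun h => hu h.symm
          simp [h1, h2, hu, hu', h3, h4]
        · rw [ec_head tail head n et u _ l (hloop et) hnd (by rw [h1]; exact hv'l)
            (by rw [h2]; exact hvl)]
          have h3 : v' ≠ u := fun h => hu' h.symm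
          have h4 : v ≠ u := fun h => hu h.symm
          simp [h1, h2, hu, hu', h3, h4]
      · by_cases htl : tail et ∈ l
        · exact ec_both tail head n et u _ l (hloop et) hnd htl ((hside et hbet).mp htl)
        · exact ec_none tail head n et u _ l htl (fun h => htl ((hside et hbet).mpr h))
    rw [Finset.sum_congr rfl fun e _ => key e]
    simp


end LLS
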